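/- arXiv:2503.14115 — 3 statements merged into one kernel-verified Lean document; each statement's English description precedes it below -/
import Mathlib

section
/- Let T be a trajectory with n vertices and Δ ≥ 0. If there exists a directed path in the free-space graph M_Δ(T, T) from vertex (b, d) to vertex (a, c) with a ≤ b and c ≤ d, then the discrete Fréchet distance between the subtrajectories T[a, b] and T[c, d] is at most Δ. -/
/-- One step of a discrete walk: each coordinate stays or decreases by one. -/
def Step (p q : ℕ × ℕ) : Prop :=
  (q.1 = p.1 ∨ q.1 + 1 = p.1) ∧ (q.2 = p.2 ∨ q.2 + 1 = p.2)

/-- A discrete walk from `(x, y)` down to `(1, 1)`. -/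
def IsWalk (F : List (ℕ × ℕ)) (x y : ℕ) : Prop :=
  F.head? = some (x, y) ∧ F.getLast? = some (1, 1) ∧ List.Chain' Step F

/-- The cost of a discrete walk: maximum pointwise distance along the walk. -/
noncomputable def walkCost (P Q : ℕ → ℝ × ℝ) (F : List (ℕ × ℕ)) : ℝ :=
  (F.map fun p => dist (P p.1) (Q p.2)).foldr max 0

/-- The discrete Fréchet distance between the sequences `P 1, …, P x` and `Q 1, …, Q y`. -/
noncomputable def dF (P : ℕ → ℝ × ℝ) (x : ℕ) (Q : ℕ → ℝ × ℝ) (y : ℕ) : ℝ :=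
  sInf {c | ∃ F, IsWalk F x y ∧ walkCost P Q F = c}

/-- The subtrajectory of `T` starting at index `a`, reindexed from `1`. -/
def subtraj (T : ℕ → ℝ × ℝ) (a : ℕ) : ℕ → ℝ × ℝ := fun i => T (a + i - 1)

/-- A directed path in the free-space graph `M_Δ(T, T)` from `s` to `t`:
all visited cells are zeroes (distance at most `Δ`) and consecutive cells
differ by a step of the grid graph. -/
def IsFSPath (T : ℕ → ℝ × ℝ) (Δ : ℝ) (F : List (ℕ × ℕ)) (s t : ℕ × ℕ) : Prop :=
  F.head? = some s ∧ F.getLast? = some t ∧ List.Chain' Step F ∧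
  ∀ p ∈ F, dist (T p.1) (T p.2) ≤ Δ

/-- Along a walk, coordinates are bounded below by the last element. -/
lemma walk_mono (F : List (ℕ × ℕ)) (t : ℕ × ℕ) (hl : F.getLast? = some t)
    (hch : List.Chain' Step F) : ∀ p ∈ F, t.1 ≤ p.1 ∧ t.2 ≤ p.2 := by
  induction F with
  | nil => simp at hl
  | cons x xs ih =>
    cases xs with
    | nil =>
      simp at hl
      intro p hp
      simp at hp
      subst hp; subst hl; exact ⟨le_refl _, le_refl _⟩
    | cons y ys =>
      rw [List.getLast?_cons_cons] at hl
      unfold List.Chain' at hch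
      rw [List.isChain_cons_cons] at hch
      obtain ⟨hxy, hch'⟩ := hch
      have ihy := ih hl hch'
      intro p hp
      rcases List.mem_cons.mp hp with h | h
      · subst h
        have hy := ihy y List.mem_cons_self
        obtain ⟨h1, h2⟩ := hxy
        constructor
        · rcases h1 with h1 | h1 <;> omega
        · rcases h2 with h2 | h2 <;> omega
      · exact ihy p h

lemma foldr_max_nonneg (l : List ℝ) : 0 ≤ l.foldr max 0 := by
  induction l with
  | nil => simp
  | cons x xs ih => exact le_trans ih (le_max_right _ _)

lemma foldr_max_le (l : List ℝ) (Δ : ℝ) (hΔ : 0 ≤ Δ) (h : ∀ x ∈ l, x ≤ Δ) :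
    l.foldr max 0 ≤ Δ := by
  induction l with
  | nil => simpa
  | cons x xs ih =>
    simp only [List.foldr_cons]
    exact max_le (h x List.mem_cons_self) (ih fun y hy => h y (List.mem_cons_of_mem _ hy))

/-- if there is a directed path in the free-space graph M_Δ(T,T) from (b,d)
to (a,c), then the discrete Fréchet distance between T[a,b] and T[c,d] is at most Δ. -/
theorem path_imp_frechet_le (T : ℕ → ℝ × ℝ) (n : ℕ) (Δ : ℝ) (hΔ : 0 ≤ Δ)
    (a b c d : ℕ) (ha : 1 ≤ a) (hab : a ≤ b) (hb : b ≤ n)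
    (hc : 1 ≤ c) (hcd : c ≤ d) (hd : d ≤ n)
    (F : List (ℕ × ℕ)) (hF : IsFSPath T Δ F (b, d) (a, c)) :
    dF (subtraj T a) (b - a + 1) (subtraj T c) (d - c + 1) ≤ Δ := by
  obtain ⟨hhead, hlast, hch, hdist⟩ := hF
  have hbound := walk_mono F (a, c) hlast hch
  set g : ℕ × ℕ → ℕ × ℕ := fun p => (p.1 - a + 1, p.2 - c + 1) with hg
  set F' := F.map g with hF'
  have hwalk : IsWalk F' (b - a + 1) (d - c + 1) := by
    refine ⟨?_, ?_, ?_⟩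
    · rw [hF', List.head?_map, hhead]; rfl
    · rw [hF', List.getLast?_map, hlast]
      simp [hg]
    · unfold List.Chain'
      rw [hF', List.isChain_map]
      refine List.IsChain.imp ?_ (List.IsChain.iff_mem.mp hch)
      rintro p q ⟨hp, hq, hpq⟩
      obtain ⟨hp1, hp2⟩ := hbound p hp
      obtain ⟨hq1, hq2⟩ := hbound q hq
      obtain ⟨h1, h2⟩ := hpq
      constructor
      · rcases h1 with h | h
        · left; simp [hg]; omega
        · right; simp [hg]; omega
      · rcases h2 with h | h
        · left; simp [hg]; omega
        · right; simp [hg]; omega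
  have hcost : walkCost (subtraj T a) (subtraj T c) F' ≤ Δ := by
    unfold walkCost
    apply foldr_max_le _ _ hΔ
    intro x hx
    simp only [List.mem_map, hF'] at hx
    obtain ⟨p, ⟨q, hq, rfl⟩, rfl⟩ := hx
    obtain ⟨h1, h2⟩ := hbound q hq
    have e1 : subtraj T a (g q).1 = T q.1 := by
      simp [subtraj, hg]; congr 1; omega
    have e2 : subtraj T c (g q).2 = T q.2 := by
      simp [subtraj, hg]; congr 1; omega
    rw [e1, e2]
    exact hdist q hq
  have hmem : walkCost (subtraj T a) (subtraj T c) F' ∈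
      {x | ∃ G, IsWalk G (b - a + 1) (d - c + 1) ∧
        walkCost (subtraj T a) (subtraj T c) G = x} := ⟨F', hwalk, rfl⟩
  have hbdd : BddBelow {x | ∃ G, IsWalk G (b - a + 1) (d - c + 1) ∧
      walkCost (subtraj T a) (subtraj T c) G = x} := by
    refine ⟨0, ?_⟩
    rintro x ⟨G, _, rfl⟩
    exact foldr_max_nonneg _
  exact le_trans (csInf_le hbdd hmem) hcost
end

section
/- Conversely, let T be a trajectory with n vertices and Δ ≥ 0, and let a ≤ b, c ≤ d be indices in [n]. If the discrete Fréchet distance between T[a,b] and T[c,d] is at most Δ, then there is a directed path in the free-space graph M_Δ(T, T) from (b, d) to (a, c). -/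
/-- A walk from `(x,y)` to `(1,1)` exists whenever `x, y ≥ 1`. -/
lemma walk_exists : ∀ x, 1 ≤ x → ∀ y, 1 ≤ y → ∃ F, IsWalk F x y := by
  intro x hx
  induction x, hx using Nat.le_induction with
  | base =>
    intro y hy
    induction y, hy using Nat.le_induction with
    | base => exact ⟨[(1,1)], rfl, rfl, List.isChain_singleton _⟩
    | succ y hy ih =>
      obtain ⟨F, h1, h2, h3⟩ := ih
      refine ⟨(1, y+1) :: F, rfl, ?_, ?_⟩
      · cases F with
        | nil => simp at h1
        | cons q l => simpa [List.getLast?_cons_cons] using h2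
      · rw [List.Chain', List.isChain_cons]
        refine ⟨?_, h3⟩
        intro b hb
        rw [h1] at hb
        simp at hb
        subst hb
        exact ⟨Or.inl rfl, Or.inr rfl⟩
  | succ x hx ih =>
    intro y hy
    obtain ⟨F, h1, h2, h3⟩ := ih y hy
    refine ⟨(x+1, y) :: F, rfl, ?_, ?_⟩
    · cases F with
      | nil => simp at h1
      | cons q l => simpa [List.getLast?_cons_cons] using h2
    · rw [List.Chain', List.isChain_cons]
      refine ⟨?_, h3⟩
      intro b hb
      rw [h1] at hb
      simp at hb
      subst hb
      exact ⟨Or.inr rfl, Or.inl rfl⟩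

/-- Along a walk, coordinates are bounded by the head's coordinates. -/
lemma chain_bound : ∀ (F : List (ℕ × ℕ)) (x y : ℕ), List.Chain' Step F →
    F.head? = some (x, y) → ∀ p ∈ F, p.1 ≤ x ∧ p.2 ≤ y := by
  intro F
  induction F with
  | nil => intro x y _ hh; simp at hh
  | cons a l ih =>
    intro x y hc hh p hp
    simp only [List.head?_cons, Option.some.injEq] at hh
    rcases (List.mem_cons.mp hp) with hp | hp
    · subst hp; rw [hh]; exact ⟨le_refl _, le_refl _⟩
    · cases l with
      | nil => simp at hp
      | cons q l' =>
        rw [List.Chain', List.isChain_cons_cons] at hc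
        obtain ⟨⟨h1, h2⟩, hc2⟩ := hc
        obtain ⟨hb1, hb2⟩ := ih q.1 q.2 hc2 (by simp) p hp
        subst hh
        constructor <;> simp_all <;> omega

/-- `foldr max 0` of a list is either `0` or an element of the list. -/
lemma foldr_max_mem (l : List ℝ) : l.foldr max 0 = 0 ∨ l.foldr max 0 ∈ l := by
  induction l with
  | nil => left; rfl
  | cons a l ih =>
    rcases max_choice a (l.foldr max 0) with h | h
    · right; rw [List.foldr_cons, h]; exact List.mem_cons_self
    · rcases ih with ih | ih
      · left; rw [List.foldr_cons, h, ih]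
      · right; rw [List.foldr_cons, h]; exact List.mem_cons_of_mem _ ih

/-- Every element of a list is at most `foldr max 0` of the list. -/
lemma le_foldr_max (l : List ℝ) : ∀ z ∈ l, z ≤ l.foldr max 0 := by
  induction l with
  | nil => intro z hz; simp at hz
  | cons a l ih =>
    intro z hz
    rcases List.mem_cons.mp hz with hz | hz
    · subst hz; exact le_max_left _ _
    · exact le_trans (ih z hz) (le_max_right _ _)

/-- conversely, if the discrete Fréchet distance between T[a,b] and T[c,d]
is at most Δ, then there is a directed path in the free-space graph M_Δ(T,T) from (b,d)
to (a,c). -/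
theorem frechet_le_imp_path (T : ℕ → ℝ × ℝ) (n : ℕ) (Δ : ℝ) (hΔ : 0 ≤ Δ)
    (a b c d : ℕ) (ha : 1 ≤ a) (hab : a ≤ b) (hb : b ≤ n)
    (hc : 1 ≤ c) (hcd : c ≤ d) (hd : d ≤ n)
    (h : dF (subtraj T a) (b - a + 1) (subtraj T c) (d - c + 1) ≤ Δ) :
    ∃ F, IsFSPath T Δ F (b, d) (a, c) := by
  set P := subtraj T a
  set Q := subtraj T c
  set x := b - a + 1 with hxdef
  set y := d - c + 1 with hydef
  set S : Set ℝ := {c | ∃ F, IsWalk F x y ∧ walkCost P Q F = c} with hS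
  -- S is nonempty
  obtain ⟨F₀, hF₀⟩ := walk_exists x (by omega) y (by omega)
  have hSne : S.Nonempty := ⟨walkCost P Q F₀, F₀, hF₀, rfl⟩
  -- S is finite
  have hSsub : S ⊆ insert (0:ℝ)
      ((fun p : ℕ × ℕ => dist (P p.1) (Q p.2)) '' Set.Iic (x, y)) := by
    rintro r ⟨F, ⟨hh, _, hch⟩, hcost⟩
    rcases foldr_max_mem (F.map fun p => dist (P p.1) (Q p.2)) with h0 | hm
    · left; rw [← hcost]; exact h0
    · right
      rw [← hcost]
      rw [List.mem_map] at hm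
      obtain ⟨p, hp, hpe⟩ := hm
      have hbd := chain_bound F x y hch hh p hp
      exact ⟨p, by exact ⟨hbd.1, hbd.2⟩, hpe⟩
  have hSfin : S.Finite :=
    Set.Finite.subset (Set.Finite.insert 0 ((Set.finite_Iic _).image _)) hSsub
  -- infimum attained
  have hmem : sInf S ∈ S := hSne.csInf_mem hSfin
  obtain ⟨F, hwalk, hcost⟩ := hmem
  have hcostΔ : walkCost P Q F ≤ Δ := by rw [hcost]; exact h
  obtain ⟨hh, hl, hch⟩ := hwalk
  -- map F into T-coordinates
  refine ⟨F.map (fun p => (a + p.1 - 1, c + p.2 - 1)), ?_, ?_, ?_, ?_⟩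
  · rw [List.head?_map, hh]
    simp only [Option.map_some, Option.some.injEq, Prod.mk.injEq]
    omega
  · rw [List.getLast?_map, hl]
    simp only [Option.map_some, Option.some.injEq, Prod.mk.injEq]
    omega
  · rw [List.Chain', List.isChain_map]
    refine List.IsChain.imp ?_ hch
    rintro p q ⟨h1, h2⟩
    constructor <;> (dsimp only; omega)
  · intro p' hp'
    rw [List.mem_map] at hp'
    obtain ⟨p, hp, rfl⟩ := hp'
    have : dist (P p.1) (Q p.2) ≤ walkCost P Q F :=
      le_foldr_max _ _ (List.mem_map.mpr ⟨p, hp, rfl⟩)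
    exact le_trans this hcostΔ
end

section
/- Cluster cardinality is monotone under centre restriction: let T be a trajectory, Δ ≥ 0, and let [c, d] ⊆ [a, b]. If (T[a,b], 𝒫) is a Δ-cluster (every member of 𝒫 is a subtrajectory of T at discrete Fréchet distance at most Δ from T[a,b], and the index intervals of distinct members of 𝒫 are pairwise disjoint), then there exists a Δ-cluster (T[c,d], 𝒫') with |𝒫'| ≥ |𝒫|. -/
lemma walkCost_nil (P Q : ℕ → ℝ × ℝ) : walkCost P Q [] = 0 := rfl

lemma walkCost_cons (P Q : ℕ → ℝ × ℝ) (p : ℕ × ℕ) (F : List (ℕ × ℕ)) :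
    walkCost P Q (p :: F) = max (dist (P p.1) (Q p.2)) (walkCost P Q F) := rfl

lemma walkCost_nonneg (P Q : ℕ → ℝ × ℝ) (F : List (ℕ × ℕ)) : 0 ≤ walkCost P Q F := by
  induction F with
  | nil => simp [walkCost_nil]
  | cons p t ih => rw [walkCost_cons]; exact le_max_of_le_right ih

lemma dist_le_walkCost (P Q : ℕ → ℝ × ℝ) {F : List (ℕ × ℕ)} {p : ℕ × ℕ} (hp : p ∈ F) :
    dist (P p.1) (Q p.2) ≤ walkCost P Q F := by
  induction F with
  | nil => simp at hp
  | cons q t ih =>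
    rw [walkCost_cons]
    rcases List.mem_cons.1 hp with h | h
    · subst h; exact le_max_left _ _
    · exact le_max_of_le_right (ih h)

lemma walkCost_le (P Q : ℕ → ℝ × ℝ) {F : List (ℕ × ℕ)} {K : ℝ} (hK : 0 ≤ K)
    (h : ∀ p ∈ F, dist (P p.1) (Q p.2) ≤ K) : walkCost P Q F ≤ K := by
  induction F with
  | nil => simpa [walkCost_nil]
  | cons q t ih =>
    rw [walkCost_cons]
    exact max_le (h q (List.mem_cons_self)) (ih fun p hp => h p (List.mem_cons_of_mem _ hp))

lemma bddBelow_costs (P Q : ℕ → ℝ × ℝ) (x y : ℕ) :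
    BddBelow {c | ∃ F, IsWalk F x y ∧ walkCost P Q F = c} := by
  refine ⟨0, fun w hw => ?_⟩
  obtain ⟨F, _, rfl⟩ := hw
  exact walkCost_nonneg P Q F

lemma dF_le_walkCost (P Q : ℕ → ℝ × ℝ) {F : List (ℕ × ℕ)} {x y : ℕ} (hF : IsWalk F x y) :
    dF P x Q y ≤ walkCost P Q F :=
  csInf_le (bddBelow_costs P Q x y) ⟨F, hF, rfl⟩

def colW : ℕ → List (ℕ × ℕ)
  | 0 => []
  | n+1 => (1, n+1) :: colW n

def rowW : ℕ → ℕ → List (ℕ × ℕ)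
  | 0, y => colW y
  | n+1, y => (n+2, y) :: rowW n y

def diagW : ℕ → List (ℕ × ℕ)
  | 0 => []
  | n+1 => (n+1, n+1) :: diagW n

lemma getLast?_cons_of_ne_nil {α : Type*} (a : α) {l : List α} (h : l ≠ []) :
    (a :: l).getLast? = l.getLast? := by
  cases l with
  | nil => exact absurd rfl h
  | cons b t => exact List.getLast?_cons_cons ..

lemma colW_walk : ∀ n, IsWalk (colW (n+1)) 1 (n+1) := by
  intro n
  induction n with
  | zero => exact ⟨rfl, rfl, List.isChain_singleton _⟩
  | succ m ih =>
    refine ⟨rfl, ?_, ?_⟩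
    · show ((1, m+2) :: colW (m+1)).getLast? = some (1,1)
      rw [getLast?_cons_of_ne_nil]
      · exact ih.2.1
      · show (1, m+1) :: colW m ≠ []; simp
    · show List.Chain' Step ((1, m+2) :: colW (m+1))
      rw [List.Chain', List.isChain_cons]
      refine ⟨?_, ih.2.2⟩
      intro b hb
      have : b = (1, m+1) := by
        have : (colW (m+1)).head? = some (1, m+1) := ih.1
        rw [this] at hb; exact (Option.some_inj.1 hb).symm
      subst this
      exact ⟨Or.inl rfl, Or.inr rfl⟩

lemma rowW_walk : ∀ n y, 1 ≤ y → IsWalk (rowW n y) (n+1) y := by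
  intro n
  induction n with
  | zero =>
    intro y hy
    obtain ⟨m, rfl⟩ := Nat.exists_eq_add_of_le hy
    simpa [rowW, Nat.add_comm] using colW_walk m
  | succ m ih =>
    intro y hy
    have ihw := ih y hy
    refine ⟨rfl, ?_, ?_⟩
    · show ((m+2, y) :: rowW m y).getLast? = some (1,1)
      rw [getLast?_cons_of_ne_nil]
      · exact ihw.2.1
      · intro hnil; rw [hnil] at ihw; exact absurd ihw.1 (by simp)
    · show List.Chain' Step ((m+2, y) :: rowW m y)
      rw [List.Chain', List.isChain_cons]
      refine ⟨?_, ihw.2.2⟩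
      intro b hb
      have : b = (m+1, y) := by rw [ihw.1] at hb; exact (Option.some_inj.1 hb).symm
      subst this
      exact ⟨Or.inr rfl, Or.inl rfl⟩

lemma exists_walk (x y : ℕ) (hx : 1 ≤ x) (hy : 1 ≤ y) : ∃ F, IsWalk F x y := by
  obtain ⟨n, rfl⟩ := Nat.exists_eq_add_of_le hx
  exact ⟨rowW n y, by simpa [Nat.add_comm] using rowW_walk n y hy⟩

lemma diagW_walk : ∀ n, IsWalk (diagW (n+1)) (n+1) (n+1) := by
  intro n
  induction n with
  | zero => exact ⟨rfl, rfl, List.isChain_singleton _⟩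
  | succ m ih =>
    refine ⟨rfl, ?_, ?_⟩
    · show ((m+2, m+2) :: diagW (m+1)).getLast? = some (1,1)
      rw [getLast?_cons_of_ne_nil]
      · exact ih.2.1
      · show (m+1, m+1) :: diagW m ≠ []; simp
    · show List.Chain' Step ((m+2, m+2) :: diagW (m+1))
      rw [List.Chain', List.isChain_cons]
      refine ⟨?_, ih.2.2⟩
      intro b hb
      have : b = (m+1, m+1) := by
        have h1 : (diagW (m+1)).head? = some (m+1, m+1) := ih.1
        rw [h1] at hb; exact (Option.some_inj.1 hb).symm
      subst this
      exact ⟨Or.inr rfl, Or.inr rfl⟩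

lemma diagW_mem : ∀ n, ∀ p ∈ diagW n, p.1 = p.2 := by
  intro n
  induction n with
  | zero => intro p hp; simp [diagW] at hp
  | succ m ih =>
    intro p hp
    rcases List.mem_cons.1 hp with h | h
    · subst h; rfl
    · exact ih p h

lemma dF_self_le (P : ℕ → ℝ × ℝ) (n : ℕ) (hn : 1 ≤ n) : dF P n P n ≤ 0 := by
  obtain ⟨m, rfl⟩ := Nat.exists_eq_add_of_le hn
  have hw := diagW_walk m
  rw [Nat.add_comm]
  calc dF P (m+1) P (m+1) ≤ walkCost P P (diagW (m+1)) := dF_le_walkCost P P hw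
    _ ≤ 0 := by
        apply walkCost_le P P le_rfl
        intro p hp
        rw [diagW_mem _ p hp]
        simp

lemma walk_pos : ∀ (F : List (ℕ × ℕ)) (X Y : ℕ), IsWalk F X Y → 1 ≤ X ∧ 1 ≤ Y := by
  intro F
  induction F with
  | nil => intro X Y hW; exact absurd hW.1 (by simp)
  | cons a t ih =>
    intro X Y hW
    have ha : a = (X, Y) := by
      have := hW.1; rw [List.head?_cons] at this; exact Option.some_inj.1 this
    subst ha
    cases t with
    | nil =>
      have hlast : (X, Y) = (1, 1) := by have := hW.2.1; simpa using this
      have hX : X = 1 := congrArg Prod.fst hlast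
      have hY : Y = 1 := congrArg Prod.snd hlast
      omega
    | cons b t' =>
      have hchain := hW.2.2
      rw [List.Chain', List.isChain_cons_cons] at hchain
      have hWb : IsWalk (b :: t') b.1 b.2 := by
        refine ⟨rfl, ?_, hchain.2⟩
        have := hW.2.1
        rwa [getLast?_cons_of_ne_nil _ (by simp)] at this
      have := ih b.1 b.2 hWb
      have hstep := hchain.1
      rcases hstep.1 with h | h <;> rcases hstep.2 with h' | h' <;> omega

lemma restrict_cols (C : ℕ) (hC : 1 ≤ C) :
    ∀ (F : List (ℕ × ℕ)) (X Y : ℕ), IsWalk F X Y → C ≤ X →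
    ∃ j F', 1 ≤ j ∧ j ≤ Y ∧ IsWalk F' (X - C + 1) (Y - j + 1) ∧
      ∀ p ∈ F', ∃ q ∈ F, C ≤ q.1 ∧ j ≤ q.2 ∧ p = (q.1 - C + 1, q.2 - j + 1) := by
  intro F
  induction F with
  | nil => intro X Y hW _; exact absurd hW.1 (by simp)
  | cons a t ih =>
    intro X Y hW hCX
    have ha : a = (X, Y) := by
      have := hW.1; rw [List.head?_cons] at this; exact Option.some_inj.1 this
    subst ha
    cases t with
    | nil =>
      have hlast : (X, Y) = (1, 1) := by
        have := hW.2.1; simpa using this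
      have hX : X = 1 := congrArg Prod.fst hlast
      have hY : Y = 1 := congrArg Prod.snd hlast
      have hC1 : C = 1 := by omega
      refine ⟨1, [(1, 1)], le_rfl, by omega, ?_, ?_⟩
      · constructor
        · simp only [List.head?_cons, Option.some_inj, Prod.mk.injEq]; omega
        · exact ⟨rfl, List.isChain_singleton _⟩
      · intro p hp
        simp only [List.mem_singleton] at hp
        subst hp
        exact ⟨(X, Y), by simp, by omega, by omega,
          by simp only [Prod.mk.injEq]; omega⟩
    | cons b t' =>
      have hchain := hW.2.2
      rw [List.Chain', List.isChain_cons_cons] at hchain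
      have hstep : Step (X, Y) b := hchain.1
      have hWb : IsWalk (b :: t') b.1 b.2 := by
        refine ⟨rfl, ?_, hchain.2⟩
        have := hW.2.1
        rwa [getLast?_cons_of_ne_nil _ (by simp)] at this
      by_cases hb1 : b.1 < C
      · -- the walk leaves [C, X] right after the head; here X = C
        have hX : X = C := by
          rcases hstep.1 with h | h <;> omega
        refine ⟨Y, [(1, 1)], ?_, le_rfl, ?_, ?_⟩
        · have := walk_pos _ _ _ hWb
          rcases hstep.2 with h | h <;> omega
        · constructor
          · simp only [List.head?_cons, Option.some_inj, Prod.mk.injEq]; omega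
          · exact ⟨rfl, List.isChain_singleton _⟩
        · intro p hp
          simp only [List.mem_singleton] at hp
          subst hp
          exact ⟨(X, Y), by simp, by omega, le_rfl,
            by simp only [Prod.mk.injEq]; omega⟩
      · push_neg at hb1
        obtain ⟨j, F'', hj1, hjY', hWF'', hmem⟩ := ih b.1 b.2 hWb hb1
        have hjY : j ≤ Y := by
          rcases hstep.2 with h | h <;> omega
        refine ⟨j, (X - C + 1, Y - j + 1) :: F'', hj1, hjY, ?_, ?_⟩
        · refine ⟨rfl, ?_, ?_⟩
          · rw [getLast?_cons_of_ne_nil]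
            · exact hWF''.2.1
            · intro hnil; rw [hnil] at hWF''; exact absurd hWF''.1 (by simp)
          · rw [List.Chain', List.isChain_cons]
            refine ⟨?_, hWF''.2.2⟩
            intro z hz
            rw [hWF''.1] at hz
            have hz' : z = (b.1 - C + 1, b.2 - j + 1) := (Option.some_inj.1 hz).symm
            subst hz'
            constructor
            · rcases hstep.1 with h | h
              · left; simp; omega
              · right; simp; omega
            · rcases hstep.2 with h | h
              · left; simp; omega
              · right; simp
                have : j ≤ b.2 := hjY'
                omega
        · intro p hp
          rcases List.mem_cons.1 hp with h | h
          · subst h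
            exact ⟨(X, Y), by simp, by omega, hjY, rfl⟩
          · obtain ⟨q, hq, h1, h2, h3⟩ := hmem p h
            exact ⟨q, List.mem_cons_of_mem _ hq, h1, h2, h3⟩

lemma reach_row (D : ℕ) (hD : 1 ≤ D) :
    ∀ (F : List (ℕ × ℕ)) (X Y : ℕ), IsWalk F X Y → D ≤ X →
    ∃ G Y2, Y2 ≤ Y ∧ IsWalk G D Y2 ∧ ∀ p ∈ G, p ∈ F := by
  intro F
  induction F with
  | nil => intro X Y hW _; exact absurd hW.1 (by simp)
  | cons a t ih =>
    intro X Y hW hDX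
    have ha : a = (X, Y) := by
      have := hW.1; rw [List.head?_cons] at this; exact Option.some_inj.1 this
    subst ha
    by_cases hX : X = D
    · subst hX
      exact ⟨(X, Y) :: t, Y, le_rfl, hW, fun p hp => hp⟩
    · have hDX' : D < X := by omega
      cases t with
      | nil =>
        have hlast : (X, Y) = (1, 1) := by have := hW.2.1; simpa using this
        have : X = 1 := congrArg Prod.fst hlast
        omega
      | cons b t' =>
        have hchain := hW.2.2
        rw [List.Chain', List.isChain_cons_cons] at hchain
        have hstep := hchain.1
        have hWb : IsWalk (b :: t') b.1 b.2 := by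
          refine ⟨rfl, ?_, hchain.2⟩
          have := hW.2.1
          rwa [getLast?_cons_of_ne_nil _ (by simp)] at this
        have hDb : D ≤ b.1 := by rcases hstep.1 with h | h <;> omega
        obtain ⟨G, Y2, hY2, hG, hmem⟩ := ih b.1 b.2 hWb hDb
        have hbY : b.2 ≤ Y := by rcases hstep.2 with h | h <;> omega
        exact ⟨G, Y2, le_trans hY2 hbY, hG, fun p hp => List.mem_cons_of_mem _ (hmem p hp)⟩

lemma restrict_walk_cost (T : ℕ → ℝ × ℝ) (a b c d x y : ℕ)
    (hac : a ≤ c) (hcd : c ≤ d) (hdb : d ≤ b) (hx : 1 ≤ x) (hxy : x ≤ y)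
    (F : List (ℕ × ℕ)) (hF : IsWalk F (b - a + 1) (y - x + 1)) :
    ∃ x' y', x ≤ x' ∧ x' ≤ y' ∧ y' ≤ y ∧
      dF (subtraj T c) (d - c + 1) (subtraj T x') (y' - x' + 1) ≤
        walkCost (subtraj T a) (subtraj T x) F := by
  obtain ⟨G, Y2, hY2, hG, hGmem⟩ :=
    reach_row (d - a + 1) (by omega) F (b - a + 1) (y - x + 1) hF (by omega)
  obtain ⟨j, F', hj1, hjY2, hF', hF'mem⟩ :=
    restrict_cols (c - a + 1) (by omega) G (d - a + 1) Y2 hG (by omega)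
  have hY21 : 1 ≤ Y2 := by omega
  refine ⟨x + j - 1, x + Y2 - 1, by omega, by omega, by omega, ?_⟩
  have he1 : (d - a + 1) - (c - a + 1) + 1 = d - c + 1 := by omega
  have he2 : Y2 - j + 1 = (x + Y2 - 1) - (x + j - 1) + 1 := by omega
  rw [he1, he2] at hF'
  refine le_trans (dF_le_walkCost _ _ hF') ?_
  apply walkCost_le _ _ (walkCost_nonneg _ _ _)
  intro p hp
  obtain ⟨q, hq, hq1, hq2, hpq⟩ := hF'mem p hp
  subst hpq
  have hd1 : subtraj T c (q.1 - (c - a + 1) + 1) = subtraj T a q.1 := by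
    simp only [subtraj]
    congr 1
    omega
  have hd2 : subtraj T (x + j - 1) (q.2 - j + 1) = subtraj T x q.2 := by
    simp only [subtraj]
    congr 1
    omega
  rw [hd1, hd2]
  exact dist_le_walkCost _ _ (hGmem q hq)

lemma restrict_dF (T : ℕ → ℝ × ℝ) (Δ : ℝ) (a b c d x y : ℕ)
    (hac : a ≤ c) (hcd : c ≤ d) (hdb : d ≤ b) (hx : 1 ≤ x) (hxy : x ≤ y)
    (h : dF (subtraj T a) (b - a + 1) (subtraj T x) (y - x + 1) ≤ Δ) :
    ∃ x' y', x ≤ x' ∧ x' ≤ y' ∧ y' ≤ y ∧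
      dF (subtraj T c) (d - c + 1) (subtraj T x') (y' - x' + 1) ≤ Δ := by
  classical
  set S : Finset ℝ :=
    ((Finset.Icc x y ×ˢ Finset.Icc x y).filter fun p => p.1 ≤ p.2).image
      (fun p => dF (subtraj T c) (d - c + 1) (subtraj T p.1) (p.2 - p.1 + 1)) with hS
  have hSne : S.Nonempty := by
    refine ⟨dF (subtraj T c) (d - c + 1) (subtraj T x) (y - x + 1), ?_⟩
    rw [hS]
    have hm : ((x, y) : ℕ × ℕ) ∈
        ((Finset.Icc x y ×ˢ Finset.Icc x y).filter fun p => p.1 ≤ p.2) := by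
      simp [Finset.mem_filter, hxy]
    exact Finset.mem_image_of_mem _ hm
  have hmin : S.min' hSne ≤ Δ := by
    by_contra hm
    push_neg at hm
    have hne : Set.Nonempty {w | ∃ F, IsWalk F (b - a + 1) (y - x + 1) ∧
        walkCost (subtraj T a) (subtraj T x) F = w} := by
      obtain ⟨F, hF⟩ := exists_walk (b - a + 1) (y - x + 1) (by omega) (by omega)
      exact ⟨_, F, hF, rfl⟩
    have hlt : dF (subtraj T a) (b - a + 1) (subtraj T x) (y - x + 1) < S.min' hSne :=
      lt_of_le_of_lt h hm
    rw [dF] at hlt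
    obtain ⟨w, hw, hwlt⟩ := (csInf_lt_iff (bddBelow_costs _ _ _ _) hne).1 hlt
    obtain ⟨F, hF, rfl⟩ := hw
    obtain ⟨x', y', h1, h2, h3, h4⟩ :=
      restrict_walk_cost T a b c d x y hac hcd hdb hx hxy F hF
    have hmem : dF (subtraj T c) (d - c + 1) (subtraj T x') (y' - x' + 1) ∈ S := by
      rw [hS]
      have hm : ((x', y') : ℕ × ℕ) ∈
          ((Finset.Icc x y ×ˢ Finset.Icc x y).filter fun p => p.1 ≤ p.2) := by
        simp only [Finset.mem_filter, Finset.mem_product, Finset.mem_Icc]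
        exact ⟨⟨⟨h1, le_trans h2 h3⟩, ⟨le_trans h1 h2, h3⟩⟩, h2⟩
      exact Finset.mem_image_of_mem _ hm
    exact absurd (S.min'_le _ hmem) (not_le.2 (lt_of_le_of_lt h4 hwlt))
  obtain ⟨p, hp, hpe⟩ := Finset.mem_image.1 (S.min'_mem hSne)
  simp only [Finset.mem_filter, Finset.mem_product, Finset.mem_Icc] at hp
  exact ⟨p.1, p.2, hp.1.1.1, hp.2, hp.1.2.2, by rw [hpe]; exact hmin⟩

/-- `(T[a,b], Ps)` is a `Δ`-cluster: members of `Ps` are subtrajectories (given by their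
index intervals) at discrete Fréchet distance at most `Δ` from the centre `T[a,b]`,
the index intervals of distinct members are pairwise disjoint, and the centre is a member. -/
def IsCluster (T : ℕ → ℝ × ℝ) (Δ : ℝ) (a b : ℕ) (Ps : Finset (ℕ × ℕ)) : Prop :=
  (a, b) ∈ Ps ∧
  (∀ p ∈ Ps, 1 ≤ p.1 ∧ p.1 ≤ p.2 ∧
    dF (subtraj T a) (b - a + 1) (subtraj T p.1) (p.2 - p.1 + 1) ≤ Δ) ∧
  ∀ p ∈ Ps, ∀ q ∈ Ps, p ≠ q → Disjoint (Finset.Icc p.1 p.2) (Finset.Icc q.1 q.2)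

/-- cluster cardinality is monotone under centre restriction: if
(T[a,b], Ps) is a Δ-cluster and [c,d] ⊆ [a,b], then there is a Δ-cluster (T[c,d], Ps')
with at least as many members. -/
theorem cluster_card_mono (T : ℕ → ℝ × ℝ) (Δ : ℝ) (hΔ : 0 ≤ Δ)
    (a b c d : ℕ) (hac : a ≤ c) (hcd : c ≤ d) (hdb : d ≤ b)
    (Ps : Finset (ℕ × ℕ)) (h : IsCluster T Δ a b Ps) :
    ∃ Ps' : Finset (ℕ × ℕ), IsCluster T Δ c d Ps' ∧ Ps.card ≤ Ps'.card := by
  classical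
  obtain ⟨hab, hmemP, hdisj⟩ := h
  have key : ∀ p ∈ Ps, ∃ q : ℕ × ℕ, p.1 ≤ q.1 ∧ q.1 ≤ q.2 ∧ q.2 ≤ p.2 ∧
      dF (subtraj T c) (d - c + 1) (subtraj T q.1) (q.2 - q.1 + 1) ≤ Δ := by
    intro p hp
    obtain ⟨h1, h2, h3⟩ := hmemP p hp
    obtain ⟨x', y', hx1, hx2, hx3, hx4⟩ :=
      restrict_dF T Δ a b c d p.1 p.2 hac hcd hdb h1 h2 h3
    exact ⟨(x', y'), hx1, hx2, hx3, hx4⟩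
  let g : ℕ × ℕ → ℕ × ℕ := fun p =>
    if hp : p ∈ Ps then (if p = (a, b) then (c, d) else (key p hp).choose) else p
  -- the main property of g
  have hg : ∀ p ∈ Ps, p.1 ≤ (g p).1 ∧ (g p).1 ≤ (g p).2 ∧ (g p).2 ≤ p.2 ∧
      dF (subtraj T c) (d - c + 1) (subtraj T (g p).1) ((g p).2 - (g p).1 + 1) ≤ Δ := by
    intro p hp
    by_cases hpc : p = (a, b)
    · have hgp : g p = (c, d) := by simp only [g, dif_pos hp, if_pos hpc]
      rw [hgp]
      subst hpc
      refine ⟨hac, hcd, hdb, ?_⟩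
      exact le_trans (dF_self_le _ _ (by omega)) hΔ
    · have hgp : g p = (key p hp).choose := by simp only [g, dif_pos hp, if_neg hpc]
      rw [hgp]
      exact (key p hp).choose_spec
  have hgab : g (a, b) = (c, d) := by simp [g, hab]
  -- Icc inclusion
  have hIcc : ∀ p ∈ Ps, Finset.Icc (g p).1 (g p).2 ⊆ Finset.Icc p.1 p.2 := by
    intro p hp
    obtain ⟨h1, _, h3, _⟩ := hg p hp
    exact Finset.Icc_subset_Icc h1 h3
  have hne : ∀ p ∈ Ps, (Finset.Icc (g p).1 (g p).2).Nonempty := by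
    intro p hp
    obtain ⟨_, h2, _, _⟩ := hg p hp
    exact ⟨(g p).1, Finset.mem_Icc.2 ⟨le_rfl, h2⟩⟩
  have hinj : Set.InjOn g Ps := by
    intro p hp q hq hpq
    by_contra hne'
    have hd := hdisj p hp q hq hne'
    obtain ⟨z, hz⟩ := hne p hp
    have hz1 : z ∈ Finset.Icc p.1 p.2 := hIcc p hp hz
    have hz2 : z ∈ Finset.Icc q.1 q.2 := hIcc q hq (hpq ▸ hz)
    exact Finset.disjoint_left.1 hd hz1 hz2
  refine ⟨Ps.image g, ⟨?_, ?_, ?_⟩, ?_⟩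
  · exact Finset.mem_image.2 ⟨(a, b), hab, hgab⟩
  · intro q hq
    obtain ⟨p, hp, rfl⟩ := Finset.mem_image.1 hq
    obtain ⟨h1, h2, h3, h4⟩ := hg p hp
    have := (hmemP p hp).1
    exact ⟨by omega, h2, h4⟩
  · intro q1 hq1 q2 hq2 hq12
    obtain ⟨p1, hp1, rfl⟩ := Finset.mem_image.1 hq1
    obtain ⟨p2, hp2, rfl⟩ := Finset.mem_image.1 hq2
    have hp12 : p1 ≠ p2 := fun h => hq12 (by rw [h])
    exact Finset.disjoint_of_subset_left (hIcc p1 hp1)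
      (Finset.disjoint_of_subset_right (hIcc p2 hp2) (hdisj p1 hp1 p2 hp2 hp12))
  · rw [Finset.card_image_of_injOn hinj]
end
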